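/- arXiv:2508.13657 — 2 statements merged into one kernel-verified Lean document; each statement's English description precedes it below -/
import Mathlib

section
/- Let t ≥ 1 be a natural number, n ≥ 1 a natural number, c ≥ 0 a real number, and let a, b ∈ [0,1] be real numbers with 1 − b ≤ 1/t². If |a − b| ≤ √( 2(1 − b)·c / n ), then |a^t − b^t| ≤ √( 2c/n ). In particular, if x ∈ ℝ satisfies F(x) ≥ 1 − 1/t² and the empirical CDF satisfies |F_n(x) − F(x)| ≤ √( 2(1 − F(x))·c / n ), then |F_n(x)^t − F(x)^t| ≤ √( 2c/n ). -/
lemma abs_pow_sub_pow_le_aux (a b : ℝ) (ha : a ∈ Set.Icc (0:ℝ) 1)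
    (hb : b ∈ Set.Icc (0:ℝ) 1) (t : ℕ) :
    |a ^ t - b ^ t| ≤ t * |a - b| := by
  induction t with
  | zero => simp
  | succ k ih =>
    have h1 : a ^ (k+1) - b ^ (k+1) = a * (a ^ k - b ^ k) + (a - b) * b ^ k := by ring
    have hak : |a| ≤ 1 := abs_le.2 ⟨by linarith [ha.1], ha.2⟩
    have hbk : |b ^ k| ≤ 1 := by
      rw [abs_pow]
      exact pow_le_one₀ (abs_nonneg b) (abs_le.2 ⟨by linarith [hb.1], hb.2⟩)
    calc |a ^ (k+1) - b ^ (k+1)| ≤ |a * (a ^ k - b ^ k)| + |(a - b) * b ^ k| := by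
          rw [h1]; exact abs_add_le _ _
      _ ≤ 1 * (k * |a - b|) + |a - b| * 1 := by
          rw [abs_mul, abs_mul]
          gcongr

      _ = (k + 1 : ℕ) * |a - b| := by push_cast; ring

/-- Let `t ≥ 1`, `n ≥ 1` be natural numbers and `c ≥ 0` real. For `a, b ∈ [0,1]` with
`1 - b ≤ 1 / t²`, if `|a - b| ≤ √(2 (1 - b) c / n)` then `|a ^ t - b ^ t| ≤ √(2 c / n)`.
In particular, for a CDF `F` and an empirical CDF `Fₙ` (both with values in `[0,1]`),
if `F x ≥ 1 - 1 / t²` and `|Fₙ x - F x| ≤ √(2 (1 - F x) c / n)`, then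
`|Fₙ x ^ t - F x ^ t| ≤ √(2 c / n)`. -/
theorem pow_deviation_of_light_tail
    (t n : ℕ) (ht : 1 ≤ t) (hn : 1 ≤ n) (c : ℝ) (hc : 0 ≤ c) :
    (∀ a ∈ Set.Icc (0 : ℝ) 1, ∀ b ∈ Set.Icc (0 : ℝ) 1,
      1 - b ≤ 1 / (t : ℝ) ^ 2 →
      |a - b| ≤ Real.sqrt (2 * (1 - b) * c / n) →
      |a ^ t - b ^ t| ≤ Real.sqrt (2 * c / n)) ∧
    (∀ F Fn : ℝ → ℝ,
      (∀ y, F y ∈ Set.Icc (0 : ℝ) 1) → (∀ y, Fn y ∈ Set.Icc (0 : ℝ) 1) →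
      ∀ x : ℝ, 1 - 1 / (t : ℝ) ^ 2 ≤ F x →
      |Fn x - F x| ≤ Real.sqrt (2 * (1 - F x) * c / n) →
      |Fn x ^ t - F x ^ t| ≤ Real.sqrt (2 * c / n)) := by
  have ht' : (0:ℝ) < t := by exact_mod_cast ht
  have hn' : (0:ℝ) < n := by exact_mod_cast hn
  have key : ∀ a ∈ Set.Icc (0 : ℝ) 1, ∀ b ∈ Set.Icc (0 : ℝ) 1,
      1 - b ≤ 1 / (t : ℝ) ^ 2 →
      |a - b| ≤ Real.sqrt (2 * (1 - b) * c / n) →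
      |a ^ t - b ^ t| ≤ Real.sqrt (2 * c / n) := by
    intro a ha b hb htail hab
    have hb1 : 0 ≤ 1 - b := by linarith [hb.2]
    calc |a ^ t - b ^ t| ≤ t * |a - b| := abs_pow_sub_pow_le_aux a b ha hb t
      _ ≤ t * Real.sqrt (2 * (1 - b) * c / n) := by gcongr
      _ = Real.sqrt ((t:ℝ)^2 * (2 * (1 - b) * c / n)) := by
          rw [Real.sqrt_mul (sq_nonneg _), Real.sqrt_sq ht'.le]
      _ ≤ Real.sqrt (2 * c / n) := by
          apply Real.sqrt_le_sqrt
          have h2 : (t:ℝ)^2 * (1 - b) ≤ 1 := by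
            have hpos : (0:ℝ) < (t:ℝ)^2 := by positivity
            rw [← le_div_iff₀' hpos]
            simpa [div_eq_mul_inv, one_div] using htail
          calc (t:ℝ)^2 * (2 * (1 - b) * c / n) = ((t:ℝ)^2 * (1 - b)) * (2 * c / n) := by
                ring
            _ ≤ 1 * (2 * c / n) := by
                have : 0 ≤ 2*c/(n:ℝ) := by positivity
                nlinarith
            _ = 2 * c / n := one_mul _
  refine ⟨key, fun F Fn hF hFn x hx hab => ?_⟩
  exact key (Fn x) (hFn x) (F x) (hF x) (by linarith) hab
end

section
/- Let n ≥ 1 and let X_1, …, X_n be i.i.d. real-valued random variables with common CDF F, let F_n be their empirical CDF, let t ≥ 1 be a natural number, and let x ∈ ℝ satisfy 1 − F(x) ≤ 1/t². Then for every δ ∈ (0,2), P( |F_n(x)^t − F(x)^t| ≥ √( 2 ln(2/δ) / n ) + (2t ln(2/δ))/(3n) ) ≤ δ. -/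
open Real

lemma aux_psi_nonneg {l : ℝ} (hl : 0 ≤ l) : 0 ≤ l + 2 + Real.exp l * (l - 2) := by
  have key : Monotone (fun l : ℝ => l + 2 + Real.exp l * (l - 2)) := by
    apply monotone_of_deriv_nonneg
    · fun_prop
    · intro y
      have hd : HasDerivAt (fun l : ℝ => l + 2 + Real.exp l * (l - 2))
          (1 + Real.exp y * (y - 1)) y := by
        have h := (Real.hasDerivAt_exp y).mul ((hasDerivAt_id y).sub_const 2)
        have h2 := (((hasDerivAt_id y).add_const 2)).add h
        refine HasDerivAt.congr_deriv h2 ?_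
        simp only [id]; ring
      rw [hd.deriv]
      have h1 : Real.exp y * (-y + 1) ≤ Real.exp y * Real.exp (-y) :=
        mul_le_mul_of_nonneg_left (Real.add_one_le_exp (-y)) (Real.exp_pos y).le
      rw [← Real.exp_add] at h1
      simp only [add_neg_cancel, Real.exp_zero] at h1
      nlinarith [h1]
  have := key hl
  simpa using this

lemma aux_bernstein_ineq {l : ℝ} (hl : 0 ≤ l) :
    (1 - l / 3) * (Real.exp l - 1 - l) ≤ l ^ 2 / 2 := by
  have key : MonotoneOn (fun l : ℝ => l ^ 2 / 2 - (1 - l / 3) * (Real.exp l - 1 - l))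
      (Set.Ici 0) := by
    apply monotoneOn_of_deriv_nonneg (convex_Ici 0)
    · exact Continuous.continuousOn (by fun_prop)
    · exact Differentiable.differentiableOn (by fun_prop)
    · intro y hy
      rw [interior_Ici] at hy
      have hd : HasDerivAt (fun l : ℝ => l ^ 2 / 2 - (1 - l / 3) * (Real.exp l - 1 - l))
          ((y + 2 + Real.exp y * (y - 2)) / 3) y := by
        have h1 : HasDerivAt (fun l : ℝ => l ^ 2 / 2) y y := by
          simpa using ((hasDerivAt_pow 2 y).div_const 2)
        have h2 : HasDerivAt (fun l : ℝ => 1 - l / 3) (-(1/3)) y := by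
          simpa using ((hasDerivAt_id y).div_const 3).const_sub 1
        have h3 : HasDerivAt (fun l : ℝ => Real.exp l - 1 - l) (Real.exp y - 1) y := by
          exact ((Real.hasDerivAt_exp y).sub_const 1).sub (hasDerivAt_id y)
        have := h1.sub (h2.mul h3)
        refine HasDerivAt.congr_deriv this ?_
        ring
      rw [hd.deriv]
      have := aux_psi_nonneg hy.le
      linarith
  have := key Set.self_mem_Ici (Set.mem_Ici.mpr hl) hl
  simp only [Real.exp_zero] at this
  nlinarith [this]

lemma aux_exp_neg_ineq {l : ℝ} (hl : 0 ≤ l) :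
    Real.exp (-l) - 1 + l ≤ l ^ 2 / 2 := by
  have key : MonotoneOn (fun l : ℝ => l ^ 2 / 2 - (Real.exp (-l) - 1 + l))
      (Set.Ici 0) := by
    apply monotoneOn_of_deriv_nonneg (convex_Ici 0)
    · exact Continuous.continuousOn (by fun_prop)
    · exact Differentiable.differentiableOn (by fun_prop)
    · intro y hy
      rw [interior_Ici] at hy
      have hd : HasDerivAt (fun l : ℝ => l ^ 2 / 2 - (Real.exp (-l) - 1 + l))
          (y - (-Real.exp (-y) + 1)) y := by
        have h1 : HasDerivAt (fun l : ℝ => l ^ 2 / 2) y y := by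
          simpa using ((hasDerivAt_pow 2 y).div_const 2)
        have h2 : HasDerivAt (fun l : ℝ => Real.exp (-l) - 1 + l) (-Real.exp (-y) + 1) y := by
          have := ((Real.hasDerivAt_exp (-y)).comp y ((hasDerivAt_id y).neg))
          refine HasDerivAt.congr_deriv ((this.sub_const 1).add (hasDerivAt_id y)) ?_
          ring
        exact h1.sub h2
      rw [hd.deriv]
      nlinarith [Real.add_one_le_exp (-y)]
  have := key Set.self_mem_Ici (Set.mem_Ici.mpr hl) hl
  simp only [neg_zero, Real.exp_zero] at this
  nlinarith [this]

lemma aux_pow_lipschitz {a b : ℝ} (ha : a ∈ Set.Icc (0:ℝ) 1) (hb : b ∈ Set.Icc (0:ℝ) 1)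
    (t : ℕ) : |a ^ t - b ^ t| ≤ t * |a - b| := by
  induction t with
  | zero => simp
  | succ t ih =>
    have hat : |a ^ t| ≤ 1 := by
      rw [abs_of_nonneg (pow_nonneg ha.1 t)]; exact pow_le_one₀ ha.1 ha.2
    have hbt : |b| ≤ 1 := abs_le.mpr ⟨by linarith [hb.1], hb.2⟩
    calc |a ^ (t+1) - b ^ (t+1)| = |a ^ t * (a - b) + b * (a ^ t - b ^ t)| := by ring_nf
      _ ≤ |a ^ t * (a - b)| + |b * (a ^ t - b ^ t)| := abs_add_le _ _
      _ = |a ^ t| * |a - b| + |b| * |a ^ t - b ^ t| := by rw [abs_mul, abs_mul]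
      _ ≤ 1 * |a - b| + 1 * (t * |a - b|) := by
          have h1 := abs_nonneg (a - b)
          have h2 := abs_nonneg (a ^ t - b ^ t)
          have h3 := abs_nonneg (a ^ t)
          have h4 := abs_nonneg b
          nlinarith [mul_le_mul_of_nonneg_right hat h1, mul_le_mul hbt ih h2 zero_le_one,
            Nat.cast_nonneg (α := ℝ) t]
      _ = ((t:ℝ) + 1) * |a - b| := by ring
      _ = ((t+1 : ℕ) : ℝ) * |a - b| := by push_cast; ring
open MeasureTheory ProbabilityTheory

set_option maxHeartbeats 2000000 in
/-- If `X 1, …, X n` (`n ≥ 1`) are i.i.d. real-valued random variables with common CDF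
`F`, `Fₙ` is their empirical CDF, `t ≥ 1`, and `x : ℝ` satisfies `1 - F x ≤ 1 / t²`,
then for every `δ ∈ (0,2)`,
`P(|Fₙ x ^ t - F x ^ t| ≥ √(2 log (2/δ) / n) + 2 t log (2/δ) / (3 n)) ≤ δ`. -/
theorem powered_empirical_cdf_concentration_of_light_tail
    {Ω : Type*} [MeasurableSpace Ω] (P : Measure Ω) [IsProbabilityMeasure P]
    (n : ℕ) (hn : 1 ≤ n) (X : Fin n → Ω → ℝ)
    (hmeas : ∀ i, Measurable (X i))
    (hindep : iIndepFun X P)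
    (hident : ∀ i j, IdentDistrib (X i) (X j) P P)
    (F : ℝ → ℝ)
    (hF : ∀ i x, F x = (P {ω | X i ω ≤ x}).toReal)
    (t : ℕ) (ht : 1 ≤ t)
    (x : ℝ) (hx : 1 - F x ≤ 1 / (t : ℝ) ^ 2)
    (δ : ℝ) (hδ : δ ∈ Set.Ioo (0 : ℝ) 2) :
    P {ω | Real.sqrt (2 * Real.log (2 / δ) / n)
            + 2 * t * Real.log (2 / δ) / (3 * n)
          ≤ |((n : ℝ)⁻¹ * (∑ i, if X i ω ≤ x then (1 : ℝ) else 0)) ^ t - F x ^ t|}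
      ≤ ENNReal.ofReal δ := by
  obtain ⟨hδ0, hδ2⟩ := hδ
  have hn0 : (0:ℝ) < n := by exact_mod_cast hn
  have ht0 : (0:ℝ) < t := by exact_mod_cast ht
  set L : ℝ := Real.log (2 / δ) with hLdef
  have hL0 : 0 < L := Real.log_pos (by rw [lt_div_iff₀ hδ0]; linarith)
  have hexpL : Real.exp (-L) = δ / 2 := by
    rw [Real.exp_neg, Real.exp_log (by positivity)]
    field_simp
  -- indicator variables of the upper tail
  have i0 : Fin n := ⟨0, hn⟩
  set f : ℝ → ℝ := fun r => if x < r then 1 else 0 with hfdef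
  have hfmeas : Measurable f := by
    apply Measurable.ite (measurableSet_lt measurable_const measurable_id) <;> fun_prop
  set Y : Fin n → Ω → ℝ := fun i => f ∘ X i with hYdef
  have hYmeas : ∀ i, Measurable (Y i) := fun i => hfmeas.comp (hmeas i)
  have hYindep : iIndepFun Y P :=
    hindep.comp (fun _ => f) (fun _ => hfmeas)
  have hY01 : ∀ i ω, Y i ω = 0 ∨ Y i ω = 1 := by
    intro i ω
    by_cases h : x < X i ω <;> simp [hYdef, hfdef, h]
  set T : Ω → ℝ := fun ω => ∑ i, Y i ω with hTdef
  have hTmeas : Measurable T := Finset.measurable_sum _ (fun i _ => hYmeas i)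
  have hT0 : ∀ ω, 0 ≤ T ω := fun ω =>
    Finset.sum_nonneg (fun i _ => by rcases hY01 i ω with h | h <;> simp [h])
  have hTn : ∀ ω, T ω ≤ n := by
    intro ω
    calc T ω ≤ ∑ _i : Fin n, (1:ℝ) :=
          Finset.sum_le_sum (fun i _ => by rcases hY01 i ω with h | h <;> simp [h])
      _ = n := by simp
  obtain ⟨q, hqdef⟩ : ∃ q : ℝ, q = (P {ω | x < X i0 ω}).toReal := ⟨_, rfl⟩
  have hq0 : 0 ≤ q := hqdef ▸ ENNReal.toReal_nonneg
  have hAmeas : ∀ i : Fin n, MeasurableSet {ω | x < X i ω} :=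
    fun i => measurableSet_lt measurable_const (hmeas i)
  have hqi : ∀ i : Fin n, (P {ω | x < X i ω}).toReal = q := by
    intro i
    have h := (hident i i0).measure_mem_eq (measurableSet_Ioi (a := x))
    have e1 : (X i) ⁻¹' (Set.Ioi x) = {ω | x < X i ω} := rfl
    have e2 : (X i0) ⁻¹' (Set.Ioi x) = {ω | x < X i0 ω} := rfl
    rw [e1, e2] at h
    rw [hqdef, h]
  -- q = 1 - F x, hence q ≤ 1/t²
  have hq1 : q = 1 - F x := by
    have hset : {ω | x < X i0 ω} = {ω | X i0 ω ≤ x}ᶜ := by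
      ext ω; simp [not_le]
    have hms : MeasurableSet {ω | X i0 ω ≤ x} := measurableSet_le (hmeas i0) measurable_const
    rw [hqdef, hset, prob_compl_eq_one_sub hms,
      ENNReal.toReal_sub_of_le prob_le_one ENNReal.one_ne_top, hF i0 x]
    simp
  have hqle : q ≤ 1 / (t:ℝ)^2 := hq1 ▸ hx
  have hp0 : 0 ≤ F x := by rw [hF i0 x]; exact ENNReal.toReal_nonneg
  have hp1 : F x ≤ 1 := by linarith [hq1, hq0]
  -- integral of Y i
  have hYint_eq : ∀ i, ∫ ω, Y i ω ∂P = q := by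
    intro i
    have hYi_eq : Y i = Set.indicator {ω | x < X i ω} (fun _ => (1:ℝ)) := by
      funext ω
      by_cases h : x < X i ω <;> simp [hYdef, hfdef, h, Set.indicator_apply]
    rw [hYi_eq, MeasureTheory.integral_indicator_const (1:ℝ) (hAmeas i), smul_eq_mul, mul_one,
      measureReal_def, hqi i]
  have hYintble : ∀ i, Integrable (Y i) P := by
    intro i
    refine Integrable.mono' (integrable_const (1:ℝ)) (hYmeas i).aestronglyMeasurable ?_
    filter_upwards with ω
    rcases hY01 i ω with h | h <;> simp [h]
  -- mgf of Y i and of T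
  have hmgfY : ∀ (i : Fin n) (l : ℝ), mgf (Y i) P l = 1 + q * (Real.exp l - 1) := by
    intro i l
    have heq : (fun ω => Real.exp (l * Y i ω)) =
        fun ω => 1 + (Real.exp l - 1) * Y i ω := by
      funext ω
      rcases hY01 i ω with h | h <;> simp [h]
    rw [mgf, heq]
    rw [integral_add (integrable_const 1) ((hYintble i).const_mul _), integral_const,
      integral_const_mul, hYint_eq i]
    simp [mul_comm]
  have hmgf_nonneg : ∀ l : ℝ, 0 ≤ 1 + q * (Real.exp l - 1) := by
    intro l
    have h1 : 1 + q * (Real.exp l - 1) = (1 - q) + q * Real.exp l := by ring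
    have hq1' : q ≤ 1 := by
      have := hqle
      have : (1:ℝ) / (t:ℝ)^2 ≤ 1 := by
        rw [div_le_one (by positivity)]
        have : (1:ℝ) ≤ (t:ℝ) := by exact_mod_cast ht
        nlinarith
      linarith [hqle]
    rw [h1]
    have := Real.exp_pos l
    nlinarith
  have hmgfT : ∀ l : ℝ, mgf T P l ≤ Real.exp ((n:ℝ) * q * (Real.exp l - 1)) := by
    intro l
    have hsum : mgf T P l = ∏ i : Fin n, mgf (Y i) P l := by
      rw [hTdef]
      have : (fun ω => ∑ i, Y i ω) = ∑ i : Fin n, Y i := by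
        funext ω; simp
      rw [this]
      exact hYindep.mgf_sum hYmeas Finset.univ
    rw [hsum]
    have hprod : ∏ i : Fin n, mgf (Y i) P l = (1 + q * (Real.exp l - 1)) ^ n := by
      simp [hmgfY, Finset.prod_const]
    rw [hprod]
    calc (1 + q * (Real.exp l - 1)) ^ n ≤ (Real.exp (q * (Real.exp l - 1))) ^ n := by
          apply pow_le_pow_left₀ (hmgf_nonneg l)
          linarith [Real.add_one_le_exp (q * (Real.exp l - 1))]
      _ = Real.exp ((n:ℝ) * q * (Real.exp l - 1)) := by
          rw [← Real.exp_nat_mul]; ring_nf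
  -- integrability of exp(l * ±T)
  have hTexp_int : ∀ (l : ℝ) (g : Ω → ℝ), Measurable g → (∀ ω, |g ω| ≤ n) →
      Integrable (fun ω => Real.exp (l * g ω)) P := by
    intro l g hg hgb
    refine Integrable.mono' (integrable_const (Real.exp (|l| * n)))
      ((hg.const_mul l).exp).aestronglyMeasurable ?_
    filter_upwards with ω
    rw [Real.norm_eq_abs, abs_of_nonneg (Real.exp_pos _).le]
    apply Real.exp_le_exp.mpr
    calc l * g ω ≤ |l * g ω| := le_abs_self _
      _ = |l| * |g ω| := abs_mul _ _
      _ ≤ |l| * n := by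
          apply mul_le_mul_of_nonneg_left (hgb ω) (abs_nonneg l)
  -- quantities
  obtain ⟨v, hvdef⟩ : ∃ v : ℝ, v = (n:ℝ) / (t:ℝ)^2 := ⟨_, rfl⟩
  have hv0 : 0 < v := by rw [hvdef]; positivity
  have hnqv : (n:ℝ) * q ≤ v := by
    rw [hvdef]
    rw [div_eq_mul_inv, ← one_div]
    exact mul_le_mul_of_nonneg_left hqle hn0.le
  obtain ⟨s, hsdef⟩ : ∃ s : ℝ, s = Real.sqrt (2 * v * L) := ⟨_, rfl⟩
  have hs0 : 0 ≤ s := hsdef ▸ Real.sqrt_nonneg _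
  have hs2 : s ^ 2 = 2 * v * L := by rw [hsdef]; exact Real.sq_sqrt (by positivity)
  obtain ⟨D, hDdef⟩ : ∃ D : ℝ, D = s + 2 * L / 3 := ⟨_, rfl⟩
  have hD0 : 0 < D := by rw [hDdef]; positivity
  set ε : ℝ := Real.sqrt (2 * L / n) + 2 * t * L / (3 * n) with hεdef
  have hεD : ε = t * D / n := by
    rw [hεdef, hDdef, hsdef]
    have h1 : Real.sqrt (2 * L / n) = t * Real.sqrt (2 * v * L) / n := by
      have hv : 2 * v * L = (2 * L / n) * (n / t)^2 := by
        rw [hvdef]; field_simp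
      rw [hv, Real.sqrt_mul (by positivity), Real.sqrt_sq (by positivity)]
      field_simp
    rw [h1]
    field_simp
  -- the two tail events
  have hTmeasset : MeasurableSet {ω | (n:ℝ) * q + D ≤ T ω} :=
    measurableSet_le measurable_const hTmeas
  have hTmeasset2 : MeasurableSet {ω | D - (n:ℝ) * q ≤ -T ω} :=
    measurableSet_le measurable_const hTmeas.neg
  -- upper tail bound
  have hupper : (P {ω | (n:ℝ) * q + D ≤ T ω}).toReal ≤ δ / 2 := by
    obtain ⟨l1, hl1def⟩ : ∃ l1 : ℝ, l1 = D / (v + D / 3) := ⟨_, rfl⟩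
    have hw0 : 0 < v + D / 3 := by linarith
    have hl10 : 0 ≤ l1 := by rw [hl1def]; positivity
    have hch := measure_ge_le_exp_mul_mgf (X := T) (μ := P) ((n:ℝ) * q + D) hl10
      (hTexp_int l1 T hTmeas (fun ω => by rw [abs_of_nonneg (hT0 ω)]; exact hTn ω))
    refine hch.trans ?_
    have hmgf := hmgfT l1
    calc Real.exp (-l1 * ((n:ℝ) * q + D)) * mgf T P l1
        ≤ Real.exp (-l1 * ((n:ℝ) * q + D)) * Real.exp ((n:ℝ) * q * (Real.exp l1 - 1)) := by
          apply mul_le_mul_of_nonneg_left hmgf (Real.exp_pos _).le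
      _ = Real.exp ((n:ℝ) * q * (Real.exp l1 - 1 - l1) - l1 * D) := by
          rw [← Real.exp_add]; ring_nf
      _ ≤ Real.exp (-L) := by
          apply Real.exp_le_exp.mpr
          have hexp' : 0 ≤ Real.exp l1 - 1 - l1 := by
            linarith [Real.add_one_le_exp l1]
          have h1 : (n:ℝ) * q * (Real.exp l1 - 1 - l1) ≤ v * (Real.exp l1 - 1 - l1) := by
            apply mul_le_mul_of_nonneg_right hnqv hexp'
          have hb := aux_bernstein_ineq hl10
          have hfrac : 1 - l1 / 3 = v / (v + D / 3) := by
            rw [hl1def]; field_simp; ring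
          rw [hfrac] at hb
          -- v * (exp l1 - 1 - l1) ≤ l1^2 * (v + D/3) / 2 = l1 * D / 2
          have h2 : v * (Real.exp l1 - 1 - l1) ≤ l1 * D / 2 := by
            have h3 : v * (Real.exp l1 - 1 - l1) / (v + D / 3) ≤ l1 ^ 2 / 2 := by
              rw [← div_mul_eq_mul_div]; exact hb
            have h3' : v * (Real.exp l1 - 1 - l1) ≤ l1 ^ 2 / 2 * (v + D / 3) :=
              (div_le_iff₀ hw0).mp h3
            have h4 : l1 * (v + D / 3) = D := by
              rw [hl1def]; field_simp
            have h6 : l1 ^ 2 / 2 * (v + D / 3) = l1 * D / 2 := by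
              rw [show l1 ^ 2 / 2 * (v + D / 3) = l1 * (l1 * (v + D / 3)) / 2 from by ring, h4]
            linarith [h6 ▸ h3']
          -- need: l1 * D / 2 ≥ L, i.e. D^2 ≥ 2L(v + D/3)
          have h5 : L ≤ l1 * D / 2 := by
            have hD2 : 2 * L * (v + D / 3) ≤ D ^ 2 := by
              nlinarith [hs2, hs0, hL0.le, mul_nonneg hL0.le hs0]
            have hld : l1 * D / 2 = D ^ 2 / (2 * (v + D / 3)) := by
              rw [hl1def]; field_simp
            rw [hld, le_div_iff₀ (by linarith)]
            nlinarith [hD2]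
          linarith
      _ = δ / 2 := hexpL
  -- lower tail bound
  have hlower : (P {ω | D - (n:ℝ) * q ≤ -T ω}).toReal ≤ δ / 2 := by
    obtain ⟨l2, hl2def⟩ : ∃ l2 : ℝ, l2 = s / v := ⟨_, rfl⟩
    have hl20 : 0 ≤ l2 := by rw [hl2def]; positivity
    have hch := measure_ge_le_exp_mul_mgf (X := fun ω => -T ω) (μ := P) (D - (n:ℝ) * q) hl20
      (hTexp_int l2 (fun ω => -T ω) hTmeas.neg
        (fun ω => by rw [abs_neg, abs_of_nonneg (hT0 ω)]; exact hTn ω))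
    refine hch.trans ?_
    have hmgfneg : mgf (fun ω => -T ω) P l2 ≤ Real.exp ((n:ℝ) * q * (Real.exp (-l2) - 1)) := by
      have : (fun ω => -T ω) = -T := rfl
      rw [this, mgf_neg]
      exact hmgfT (-l2)
    calc Real.exp (-l2 * (D - (n:ℝ) * q)) * mgf (fun ω => -T ω) P l2
        ≤ Real.exp (-l2 * (D - (n:ℝ) * q)) * Real.exp ((n:ℝ) * q * (Real.exp (-l2) - 1)) := by
          apply mul_le_mul_of_nonneg_left hmgfneg (Real.exp_pos _).le
      _ = Real.exp ((n:ℝ) * q * (Real.exp (-l2) - 1 + l2) - l2 * D) := by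
          rw [← Real.exp_add]; ring_nf
      _ ≤ Real.exp (-L) := by
          apply Real.exp_le_exp.mpr
          have hexp' : 0 ≤ Real.exp (-l2) - 1 + l2 := by
            linarith [Real.add_one_le_exp (-l2)]
          have h1 : (n:ℝ) * q * (Real.exp (-l2) - 1 + l2) ≤ v * (Real.exp (-l2) - 1 + l2) :=
            mul_le_mul_of_nonneg_right hnqv hexp'
          have h2 : Real.exp (-l2) - 1 + l2 ≤ l2 ^ 2 / 2 := aux_exp_neg_ineq hl20
          have h3 : v * (l2 ^ 2 / 2) = L := by
            rw [hl2def]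
            field_simp
            nlinarith [hs2]
          have h4 : 2 * L ≤ l2 * D := by
            have : l2 * s = 2 * L := by
              rw [hl2def]; field_simp; nlinarith [hs2]
            nlinarith [mul_le_mul_of_nonneg_left (show s ≤ D by rw [hDdef]; linarith) hl20]
          nlinarith [mul_le_mul_of_nonneg_left h2 hv0.le]
      _ = δ / 2 := hexpL
  -- event inclusion
  have hsubset : {ω | ε ≤ |((n : ℝ)⁻¹ * (∑ i, if X i ω ≤ x then (1 : ℝ) else 0)) ^ t - F x ^ t|}
      ⊆ {ω | (n:ℝ) * q + D ≤ T ω} ∪ {ω | D - (n:ℝ) * q ≤ -T ω} := by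
    intro ω hω
    simp only [Set.mem_setOf_eq] at hω
    have hsum_eq : (∑ i, if X i ω ≤ x then (1:ℝ) else 0) = n - T ω := by
      rw [hTdef]
      have : ∀ i : Fin n, (if X i ω ≤ x then (1:ℝ) else 0) = 1 - Y i ω := by
        intro i
        by_cases h : X i ω ≤ x
        · simp [hYdef, hfdef, h, not_lt.mpr h]
        · simp [hYdef, hfdef, h, not_le.mp h]
      rw [Finset.sum_congr rfl (fun i _ => this i), Finset.sum_sub_distrib]
      simp
    set Fn : ℝ := (n : ℝ)⁻¹ * (∑ i, if X i ω ≤ x then (1 : ℝ) else 0) with hFndef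
    have hFn01 : Fn ∈ Set.Icc (0:ℝ) 1 := by
      constructor
      · rw [hFndef, hsum_eq]
        exact mul_nonneg (inv_nonneg.mpr hn0.le) (by linarith [hTn ω])
      · rw [hFndef, hsum_eq]
        rw [inv_mul_le_iff₀ hn0, mul_one]
        linarith [hT0 ω]
    have hlip := aux_pow_lipschitz hFn01 (Set.mem_Icc.mpr ⟨hp0, hp1⟩) t
    have hchain : ε ≤ t * |Fn - F x| := le_trans hω hlip
    have hFnp : Fn - F x = ((n:ℝ) * q - T ω) / n := by
      rw [hFndef, hsum_eq]
      have : F x = 1 - q := by linarith [hq1]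
      rw [this]
      field_simp
      ring
    have habs : D ≤ |T ω - (n:ℝ) * q| := by
      have h1 : t * |Fn - F x| = t * |T ω - (n:ℝ) * q| / n := by
        rw [hFnp, abs_div, abs_of_pos hn0, ← abs_neg]
        ring_nf
      rw [h1, hεD] at hchain
      have := (div_le_div_iff₀ hn0 hn0).mp hchain
      have h2 : t * D ≤ t * |T ω - (n:ℝ) * q| := by nlinarith
      exact le_of_mul_le_mul_left (by linarith) ht0
    rcases abs_cases (T ω - (n:ℝ) * q) with ⟨heq, _⟩ | ⟨heq, _⟩
    · left
      simp only [Set.mem_setOf_eq]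
      rw [heq] at habs
      linarith
    · right
      simp only [Set.mem_setOf_eq]
      rw [heq] at habs
      linarith
  -- assemble
  calc P {ω | ε ≤ |((n : ℝ)⁻¹ * (∑ i, if X i ω ≤ x then (1 : ℝ) else 0)) ^ t - F x ^ t|}
      ≤ P ({ω | (n:ℝ) * q + D ≤ T ω} ∪ {ω | D - (n:ℝ) * q ≤ -T ω}) := measure_mono hsubset
    _ ≤ P {ω | (n:ℝ) * q + D ≤ T ω} + P {ω | D - (n:ℝ) * q ≤ -T ω} := measure_union_le _ _
    _ ≤ ENNReal.ofReal (δ / 2) + ENNReal.ofReal (δ / 2) := by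
        gcongr
        · rw [← ENNReal.ofReal_toReal (measure_ne_top P _)]
          exact ENNReal.ofReal_le_ofReal hupper
        · rw [← ENNReal.ofReal_toReal (measure_ne_top P _)]
          exact ENNReal.ofReal_le_ofReal hlower
    _ = ENNReal.ofReal δ := by
        rw [← ENNReal.ofReal_add (by positivity) (by positivity)]
        norm_num
end
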